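/- Let Q₂(ℝ₊) be the cone of nondecreasing right-continuous paths q : [0,1) → ℝ₊ in L²([0,1)), with dual cone Q₂(ℝ₊)* = { p ∈ L²([0,1)) : ⟨p,q⟩ ≥ 0 for all q ∈ Q₂(ℝ₊) }. Let χ : ℝ₊ → ℝ be Lipschitz. Then the functional X(q) = ∫₀¹ χ(q(u)) du on Q₂(ℝ₊) is nondecreasing with respect to the order induced by Q₂(ℝ₊)* (meaning q' − q ∈ Q₂(ℝ₊)* implies X(q) ≤ X(q')) if and only if χ is nondecreasing and convex. -/

import Mathlib

noncomputable section

open MeasureTheory Set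
open scoped NNReal

/-- Lebesgue measure restricted to `[0,1)`. -/
def lebI : Measure ℝ := volume.restrict (Ico (0:ℝ) 1)

/-- The cone `Q₂(ℝ₊)` of nondecreasing, nonnegative, right-continuous paths
`q : [0,1) → ℝ₊` belonging to `L²([0,1))`. -/
def Qcone : Set (ℝ → ℝ) :=
  {q | MonotoneOn q (Ico (0:ℝ) 1) ∧ (∀ u ∈ Ico (0:ℝ) 1, 0 ≤ q u) ∧
    (∀ u ∈ Ico (0:ℝ) 1, ContinuousWithinAt q (Ici u) u) ∧
    MemLp q 2 lebI}

/-- Membership in the dual cone `Q₂(ℝ₊)*`: nonnegative `L²`-pairing against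
every element of `Q₂(ℝ₊)`. -/
def inDualCone (p : ℝ → ℝ) : Prop :=
  ∀ q ∈ Qcone, 0 ≤ ∫ u in Ico (0:ℝ) 1, p u * q u

instance : IsFiniteMeasure lebI := by
  constructor
  rw [lebI, Measure.restrict_apply_univ, Real.volume_Ico]
  simp
lemma integrableOn_of_memL2 {q : ℝ → ℝ} (h : MemLp q 2 lebI) :
    IntegrableOn q (Ico (0:ℝ) 1) volume := by
  have := h.mono_exponent (q := 2) (p := 1) (by norm_num)
  exact memLp_one_iff_integrable.mp this
lemma setIntegral_const_Ico {a b c : ℝ} (hab : a ≤ b) :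
    (∫ _ in Ico a b, c) = (b - a) * c := by
  rw [setIntegral_const, Real.volume_real_Ico_of_le hab, smul_eq_mul]
def stepf (x y s : ℝ) : ℝ → ℝ := fun u => if u < s then x else y

lemma stepf_mem_Qcone {x y s : ℝ} (hx : 0 ≤ x) (hxy : x ≤ y) : stepf x y s ∈ Qcone := by
  refine ⟨?_, ?_, ?_, ?_⟩
  · intro u _ v _ huv
    unfold stepf
    split_ifs with h1 h2 h2 <;> first | rfl | linarith
  · intro u _
    unfold stepf
    split_ifs <;> linarith
  · intro u hu
    by_cases hus : u < s
    · apply continuousWithinAt_const.congr_of_eventuallyEq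
      · filter_upwards [nhdsWithin_le_nhds (Iio_mem_nhds hus)] with v hv
        exact if_pos hv
      · exact if_pos hus
    · apply continuousWithinAt_const.congr_of_eventuallyEq
      · filter_upwards [self_mem_nhdsWithin] with v (hv : u ≤ v)
        exact if_neg (by push_neg at hus ⊢; linarith)
      · exact if_neg hus
  · apply MemLp.of_bound (C := |x| + |y|)
    · have hmeas : Measurable (stepf x y s) := by
        have : stepf x y s = (Iio s).piecewise (fun _ => x) (fun _ => y) := by
          ext u; by_cases h : u < s <;> simp [stepf, Set.piecewise, h, mem_Iio]
        rw [this]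
        exact Measurable.piecewise measurableSet_Iio measurable_const measurable_const
      exact hmeas.aestronglyMeasurable
    · apply ae_of_all
      intro u
      rw [Real.norm_eq_abs]
      unfold stepf
      have h1 : 0 ≤ |x| := abs_nonneg x
      have h2 : 0 ≤ |y| := abs_nonneg y
      split_ifs
      · linarith [le_abs_self x, neg_abs_le x, le_abs_self y]
      · linarith [le_abs_self y, neg_abs_le y]

-- splitting a set integral on [0,1) at s, for a function that is const·r on each piece
lemma step_mul_integral {x y s c : ℝ} {r : ℝ → ℝ} (hs0 : 0 < s) (hs1 : s < 1)
    (hint : IntegrableOn r (Ico (0:ℝ) 1) volume) :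
    (∫ u in Ico (0:ℝ) 1, (stepf x y s u - c) * r u)
      = (x - c) * (∫ u in Ico (0:ℝ) s, r u) + (y - c) * (∫ u in Ico s 1, r u) := by
  have hA : IntegrableOn r (Ico (0:ℝ) s) volume :=
    hint.mono_set (Ico_subset_Ico le_rfl hs1.le)
  have hB : IntegrableOn r (Ico s 1) volume :=
    hint.mono_set (Ico_subset_Ico hs0.le le_rfl)
  have e1 : EqOn (fun u => (stepf x y s u - c) * r u) (fun u => (x - c) * r u) (Ico (0:ℝ) s) := by
    intro u hu; simp [stepf, if_pos hu.2]
  have e2 : EqOn (fun u => (stepf x y s u - c) * r u) (fun u => (y - c) * r u) (Ico s 1) := by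
    intro u hu; simp [stepf, if_neg (not_lt.mpr hu.1)]
  rw [← Ico_union_Ico_eq_Ico hs0.le hs1.le,
    setIntegral_union (Ico_disjoint_Ico_same) measurableSet_Ico
      (IntegrableOn.congr_fun (hA.const_mul (x - c)) e1.symm measurableSet_Ico)
      (IntegrableOn.congr_fun (hB.const_mul (y - c)) e2.symm measurableSet_Ico),
    setIntegral_congr_fun measurableSet_Ico e1, setIntegral_congr_fun measurableSet_Ico e2,
    integral_const_mul, integral_const_mul]

lemma step_dual {x y s : ℝ} (hxy : x ≤ y) (hs0 : 0 < s) (hs1 : s < 1) :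
    inDualCone (fun u => stepf x y s u - (s * x + (1 - s) * y)) := by
  intro r hr
  obtain ⟨hm, h0, -, hL2⟩ := hr
  set c := s * x + (1 - s) * y with hc
  have hint : IntegrableOn r (Ico (0:ℝ) 1) volume := integrableOn_of_memL2 hL2
  have hA : IntegrableOn r (Ico (0:ℝ) s) volume :=
    hint.mono_set (Ico_subset_Ico le_rfl hs1.le)
  have hB : IntegrableOn r (Ico s 1) volume :=
    hint.mono_set (Ico_subset_Ico hs0.le le_rfl)
  have hsmem : s ∈ Ico (0:ℝ) 1 := ⟨hs0.le, hs1⟩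
  have hrs0 : 0 ≤ r s := h0 s hsmem
  have hAle : (∫ u in Ico (0:ℝ) s, r u) ≤ s * r s := by
    calc (∫ u in Ico (0:ℝ) s, r u) ≤ ∫ _ in Ico (0:ℝ) s, r s := by
          apply setIntegral_mono_on hA (integrableOn_const (lt_top_iff_ne_top.mp (by
            rw [Real.volume_Ico]; exact ENNReal.ofReal_lt_top))) measurableSet_Ico
          intro u hu
          exact hm ⟨hu.1, hu.2.trans hs1⟩ hsmem hu.2.le
      _ = s * r s := by rw [setIntegral_const_Ico hs0.le]; ring
  have hBge : (1 - s) * r s ≤ ∫ u in Ico s 1, r u := by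
    calc (1 - s) * r s = ∫ _ in Ico s 1, r s := by rw [setIntegral_const_Ico hs1.le]
      _ ≤ ∫ u in Ico s 1, r u := by
          apply setIntegral_mono_on (integrableOn_const (lt_top_iff_ne_top.mp (by
            rw [Real.volume_Ico]; exact ENNReal.ofReal_lt_top))) hB measurableSet_Ico
          intro u hu
          exact hm hsmem ⟨hs0.le.trans hu.1, hu.2⟩ hu.1
  rw [step_mul_integral hs0 hs1 hint]
  set A := ∫ u in Ico (0:ℝ) s, r u
  set B := ∫ u in Ico s 1, r u
  have k1 : 0 ≤ (y - x) * s * (B - (1 - s) * r s) :=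
    mul_nonneg (mul_nonneg (by linarith) hs0.le) (by linarith)
  have k2 : 0 ≤ (y - x) * (1 - s) * (s * r s - A) :=
    mul_nonneg (mul_nonneg (by linarith) (by linarith)) (by linarith)
  nlinarith [k1, k2]

section Forward
variable {χ : ℝ → ℝ}

lemma forward_mono
    (H : ∀ q ∈ Qcone, ∀ q' ∈ Qcone, inDualCone (fun u => q' u - q u) →
      (∫ u in Ico (0:ℝ) 1, χ (q u)) ≤ ∫ u in Ico (0:ℝ) 1, χ (q' u)) :
    MonotoneOn χ (Ici 0) := by
  intro a ha b hb hab
  have hca : (fun _ : ℝ => a) ∈ Qcone :=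
    ⟨fun u _ v _ _ => le_rfl, fun u _ => ha, fun u _ => continuousWithinAt_const, memLp_const a⟩
  have hcb : (fun _ : ℝ => b) ∈ Qcone :=
    ⟨fun u _ v _ _ => le_rfl, fun u _ => hb, fun u _ => continuousWithinAt_const, memLp_const b⟩
  have hd : inDualCone (fun _ : ℝ => b - a) := by
    intro r hr
    exact setIntegral_nonneg measurableSet_Ico
      (fun u hu => mul_nonneg (by simpa using sub_nonneg.mpr hab) (hr.2.1 u hu))
  have := H _ hca _ hcb hd
  rwa [setIntegral_const_Ico (le_refl 0 |>.trans zero_le_one),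
    setIntegral_const_Ico zero_le_one, sub_zero, one_mul, one_mul] at this

lemma forward_convex_pt
    (H : ∀ q ∈ Qcone, ∀ q' ∈ Qcone, inDualCone (fun u => q' u - q u) →
      (∫ u in Ico (0:ℝ) 1, χ (q u)) ≤ ∫ u in Ico (0:ℝ) 1, χ (q' u))
    {x y s : ℝ} (hx : 0 ≤ x) (hxy : x ≤ y) (hs0 : 0 < s) (hs1 : s < 1) :
    χ (s * x + (1 - s) * y) ≤ s * χ x + (1 - s) * χ y := by
  set c := s * x + (1 - s) * y with hc
  have hc0 : 0 ≤ c := by nlinarith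
  have hcQ : (fun _ : ℝ => c) ∈ Qcone :=
    ⟨fun u _ v _ _ => le_rfl, fun u _ => hc0, fun u _ => continuousWithinAt_const, memLp_const c⟩
  have hsQ : stepf x y s ∈ Qcone := stepf_mem_Qcone hx hxy
  have hd : inDualCone (fun u => stepf x y s u - c) := step_dual hxy hs0 hs1
  have key := H _ hcQ _ hsQ hd
  rw [setIntegral_const_Ico zero_le_one, sub_zero, one_mul] at key
  have hsplit : (∫ u in Ico (0:ℝ) 1, χ (stepf x y s u))
      = s * χ x + (1 - s) * χ y := by
    have e1 : EqOn (fun u => χ (stepf x y s u)) (fun _ => χ x) (Ico (0:ℝ) s) := by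
      intro u hu; simp [stepf, if_pos hu.2]
    have e2 : EqOn (fun u => χ (stepf x y s u)) (fun _ => χ y) (Ico s 1) := by
      intro u hu; simp [stepf, if_neg (not_lt.mpr hu.1)]
    have hvf : ∀ a b : ℝ, volume (Ico a b) < ⊤ := fun a b => by
      rw [Real.volume_Ico]; exact ENNReal.ofReal_lt_top
    rw [← Ico_union_Ico_eq_Ico hs0.le hs1.le,
      setIntegral_union (Ico_disjoint_Ico_same) measurableSet_Ico
        (IntegrableOn.congr_fun (integrableOn_const (lt_top_iff_ne_top.mp (hvf 0 s))) e1.symm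
          measurableSet_Ico)
        (IntegrableOn.congr_fun (integrableOn_const (lt_top_iff_ne_top.mp (hvf s 1))) e2.symm
          measurableSet_Ico),
      setIntegral_congr_fun measurableSet_Ico e1, setIntegral_congr_fun measurableSet_Ico e2,
      setIntegral_const_Ico hs0.le, setIntegral_const_Ico hs1.le]
    ring
  rw [hsplit] at key
  exact key

lemma forward_convex
    (H : ∀ q ∈ Qcone, ∀ q' ∈ Qcone, inDualCone (fun u => q' u - q u) →
      (∫ u in Ico (0:ℝ) 1, χ (q u)) ≤ ∫ u in Ico (0:ℝ) 1, χ (q' u)) :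
    ConvexOn ℝ (Ici 0) χ := by
  refine ⟨convex_Ici 0, ?_⟩
  intro x hx y hy a b ha hb hab
  simp only [smul_eq_mul]
  rcases eq_or_lt_of_le ha with ha0 | ha0
  · have hb1 : b = 1 := by linarith
    simp [← ha0, hb1]
  rcases eq_or_lt_of_le hb with hb0 | hb0
  · have ha1 : a = 1 := by linarith
    simp [← hb0, ha1]
  have ha1 : a < 1 := by linarith
  have hb1 : b = 1 - a := by linarith
  rcases le_total x y with hxy | hxy
  · have := forward_convex_pt H (mem_Ici.mp hx) hxy ha0 ha1
    rw [hb1]; exact this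
  · have hb1' : b < 1 := by linarith
    have ha' : a = 1 - b := by linarith
    have := forward_convex_pt H (mem_Ici.mp hy) hxy hb0 hb1'
    rw [ha']
    calc χ ((1 - b) * x + b * y) = χ (b * y + (1 - b) * x) := by ring_nf
      _ ≤ b * χ y + (1 - b) * χ x := this
      _ = (1 - b) * χ x + b * χ y := by ring

end Forward

section Backward
variable {χ : ℝ → ℝ} {K : ℝ≥0}

/-- Extension of `χ` to all of `ℝ`. -/
private def chiT (χ : ℝ → ℝ) : ℝ → ℝ := fun z => χ (max z 0)

lemma chiT_lip (hχ : LipschitzOnWith K χ (Ici 0)) : LipschitzWith K (chiT χ) := by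
  apply LipschitzWith.of_dist_le_mul
  intro a b
  have h1 : dist (χ (max a 0)) (χ (max b 0)) ≤ K * dist (max a 0) (max b 0) :=
    hχ.dist_le_mul _ (le_max_right a 0) _ (le_max_right b 0)
  have h2 : dist (max a 0) (max b 0) ≤ dist a b := by
    rw [Real.dist_eq, Real.dist_eq]
    exact abs_max_sub_max_le_abs a b 0
  calc dist (chiT χ a) (chiT χ b) ≤ K * dist (max a 0) (max b 0) := h1
    _ ≤ K * dist a b := by nlinarith [K.coe_nonneg]

lemma chiT_eq {z : ℝ} (hz : 0 ≤ z) : chiT χ z = χ z := by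
  simp [chiT, max_eq_left hz]

lemma backward_aux (hχ : LipschitzOnWith K χ (Ici 0))
    (hm : MonotoneOn χ (Ici 0)) (hcv : ConvexOn ℝ (Ici 0) χ)
    {q q' : ℝ → ℝ} (hq : q ∈ Qcone) (hq' : q' ∈ Qcone)
    (hdual : inDualCone (fun u => q' u - q u)) {ε : ℝ} (hε : 0 < ε) :
    (∫ u in Ico (0:ℝ) 1, chiT χ (q u)) ≤ (∫ u in Ico (0:ℝ) 1, chiT χ (q' u)) + 2 * K * ε := by
  obtain ⟨hqm, hq0, hqrc, hqL2⟩ := hq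
  obtain ⟨hqm', hq0', hqrc', hqL2'⟩ := hq'
  have hLip : LipschitzWith K (chiT χ) := chiT_lip hχ
  set φ : ℝ → ℝ := fun z => (chiT χ (z + ε) - chiT χ z) / ε with hφ
  -- basic properties of φ
  have hφcont : Continuous φ :=
    ((hLip.continuous.comp (continuous_id.add continuous_const)).sub hLip.continuous).div_const ε
  have hφbdd : ∀ z, |φ z| ≤ K := by
    intro z
    have := hLip.dist_le_mul (z + ε) z
    rw [Real.dist_eq, Real.dist_eq, add_sub_cancel_left, abs_of_pos hε] at this
    rw [hφ, abs_div, abs_of_pos hε, div_le_iff₀ hε]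
    exact this
  have hφ0 : ∀ z, 0 ≤ z → 0 ≤ φ z := by
    intro z hz
    have : χ z ≤ χ (z + ε) := hm hz (by positivity : (0:ℝ) ≤ z + ε) (by linarith)
    rw [hφ]
    apply div_nonneg _ hε.le
    rw [chiT_eq (by positivity), chiT_eq hz]
    linarith
  have hφmono : ∀ x, 0 ≤ x → ∀ y, 0 ≤ y → x ≤ y → φ x ≤ φ y := by
    intro x hx y hy hxy
    rcases eq_or_lt_of_le hxy with rfl | hlt
    · exact le_rfl
    rw [hφ]
    simp only
    rw [chiT_eq (by linarith), chiT_eq hx, chiT_eq (by linarith), chiT_eq hy]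
    have hmem : ∀ z : ℝ, 0 ≤ z → z ∈ Ici (0:ℝ) := fun z h => h
    have s1 : (χ (x + ε) - χ x) / (x + ε - x) ≤ (χ (y + ε) - χ x) / (y + ε - x) :=
      hcv.secant_mono (hmem x hx) (hmem _ (by linarith)) (hmem _ (by linarith))
        (by intro h; nlinarith [congrArg id h]) (by intro h; nlinarith [congrArg id h])
        (by linarith)
    have s2 : (χ x - χ (y + ε)) / (x - (y + ε)) ≤ (χ y - χ (y + ε)) / (y - (y + ε)) :=
      hcv.secant_mono (hmem _ (by linarith)) (hmem x hx) (hmem y hy)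
        (by intro h; nlinarith [congrArg id h]) (by intro h; nlinarith [congrArg id h])
        hxy
    have e1 : (χ x - χ (y + ε)) / (x - (y + ε)) = (χ (y + ε) - χ x) / (y + ε - x) := by
      rw [← neg_div_neg_eq]; ring_nf
    have e2 : (χ y - χ (y + ε)) / (y - (y + ε)) = (χ (y + ε) - χ y) / ε := by
      rw [← neg_div_neg_eq]; ring_nf
    have e3 : x + ε - x = ε := by ring
    rw [e3] at s1
    rw [e1, e2] at s2
    linarith
  -- the key subgradient-type inequality
  have key : ∀ x, 0 ≤ x → ∀ y, 0 ≤ y →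
      chiT χ x + (y - x) * φ x ≤ chiT χ y + 2 * K * ε := by
    intro x hx y hy
    have hK0 : (0:ℝ) ≤ K := K.coe_nonneg
    have hφx := hφbdd x
    rw [abs_le] at hφx
    have hφxε : φ x * ε = chiT χ (x + ε) - chiT χ x := by
      rw [hφ]; field_simp
    rcases le_or_gt (x + ε) y with h1 | h1
    · -- y ≥ x + ε
      have s1 : (χ (x + ε) - χ x) / (x + ε - x) ≤ (χ y - χ x) / (y - x) :=
        hcv.secant_mono (by exact hx) (by show (0:ℝ) ≤ _; linarith) (by exact hy)
          (by intro h; nlinarith [congrArg id h]) (by intro h; nlinarith [congrArg id h])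
          (by linarith)
      have e3 : x + ε - x = ε := by ring
      rw [e3] at s1
      have hyx : 0 < y - x := by linarith
      have hφxe : φ x = (χ (x + ε) - χ x) / ε := by
        rw [hφ]; simp only; rw [chiT_eq (by linarith), chiT_eq hx]
      have : φ x ≤ (χ y - χ x) / (y - x) := by rw [hφxe]; exact s1
      have h4 : φ x * (y - x) ≤ χ y - χ x := (le_div_iff₀ hyx).mp this
      rw [chiT_eq hx, chiT_eq hy]
      nlinarith
    rcases le_or_gt x y with h2 | h2
    · -- x ≤ y < x + ε : Lipschitz case
      have hlipy : chiT χ (x + ε) - K * (x + ε - y) ≤ chiT χ y := by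
        have hd := hLip.dist_le_mul (x + ε) y
        rw [Real.dist_eq, Real.dist_eq,
          abs_of_nonneg (show (0:ℝ) ≤ x + ε - y by linarith)] at hd
        have h5 := abs_le.mp hd
        linarith [h5.1, h5.2]
      have C : 0 ≤ (φ x + K) * (x + ε - y) :=
        mul_nonneg (by linarith) (by linarith)
      have D : 0 ≤ (K:ℝ) * (y - x) := mul_nonneg hK0 (by linarith)
      nlinarith [hlipy, hφxε, C, D]
    · -- y < x
      have s2 : (χ y - χ x) / (y - x) ≤ (χ (x + ε) - χ x) / (x + ε - x) :=
        hcv.secant_mono (by exact hx) (by exact hy) (by show (0:ℝ) ≤ _; linarith)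
          (by intro h; nlinarith [congrArg id h]) (by intro h; nlinarith [congrArg id h])
          (by linarith)
      have e3 : x + ε - x = ε := by ring
      rw [e3] at s2
      have hφxe : φ x = (χ (x + ε) - χ x) / ε := by
        rw [hφ]; simp only; rw [chiT_eq (by linarith), chiT_eq hx]
      have hyx : y - x < 0 := by linarith
      rw [← hφxe] at s2
      have h4 : φ x * (y - x) ≤ χ y - χ x := (div_le_iff_of_neg hyx).mp s2
      rw [chiT_eq hx, chiT_eq hy]
      nlinarith
  -- φ ∘ q belongs to the cone
  have hφQ : (fun u => φ (q u)) ∈ Qcone := by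
    refine ⟨?_, ?_, ?_, ?_⟩
    · intro u hu v hv huv
      exact hφmono _ (hq0 u hu) _ (hq0 v hv) (hqm hu hv huv)
    · exact fun u hu => hφ0 _ (hq0 u hu)
    · exact fun u hu => ContinuousAt.comp_continuousWithinAt (hφcont.continuousAt) (hqrc u hu)
    · apply MemLp.of_bound (hφcont.comp_aestronglyMeasurable hqL2.1) (K:ℝ)
      exact ae_of_all _ fun u => by simpa [Real.norm_eq_abs] using hφbdd (q u)
  have hpair : 0 ≤ ∫ u in Ico (0:ℝ) 1, (q' u - q u) * φ (q u) := hdual _ hφQ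
  -- integrability
  have hq1 : IntegrableOn q (Ico (0:ℝ) 1) volume := integrableOn_of_memL2 hqL2
  have hq1' : IntegrableOn q' (Ico (0:ℝ) 1) volume := integrableOn_of_memL2 hqL2'
  have hcomp : ∀ {r : ℝ → ℝ}, MemLp r 2 lebI → IntegrableOn r (Ico (0:ℝ) 1) volume →
      IntegrableOn (fun u => chiT χ (r u)) (Ico (0:ℝ) 1) volume := by
    intro r hrL2 hr1
    apply Integrable.mono' ((integrable_const (|chiT χ 0|)).add (hr1.abs.const_mul (K:ℝ)))
      (hLip.continuous.comp_aestronglyMeasurable hrL2.1)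
    apply ae_of_all
    intro u
    have hd := hLip.dist_le_mul (r u) 0
    rw [Real.dist_eq, Real.dist_eq, sub_zero] at hd
    simp only [Pi.add_apply, Real.norm_eq_abs]
    have h6 := abs_sub_abs_le_abs_sub (chiT χ (r u)) (chiT χ 0)
    linarith [h6, hd]
  have hI1 := hcomp hqL2 hq1
  have hI2 := hcomp hqL2' hq1'
  have hI3 : IntegrableOn (fun u => (q' u - q u) * φ (q u)) (Ico (0:ℝ) 1) volume := by
    have := Integrable.bdd_mul (c := (K:ℝ)) (hq1'.sub hq1)
      (hφcont.comp_aestronglyMeasurable hqL2.1)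
      (ae_of_all _ fun u => by simpa [Real.norm_eq_abs] using hφbdd (q u))
    simpa [mul_comm, IntegrableOn] using this
  -- put it together
  have hvol : volume (Ico (0:ℝ) 1) < ⊤ := by
    rw [Real.volume_Ico]; exact ENNReal.ofReal_lt_top
  have hmono_int : (∫ u in Ico (0:ℝ) 1, (chiT χ (q u) + (q' u - q u) * φ (q u)))
      ≤ ∫ u in Ico (0:ℝ) 1, (chiT χ (q' u) + 2 * K * ε) := by
    apply setIntegral_mono_on (hI1.add hI3)
      ((hI2.add (integrableOn_const (lt_top_iff_ne_top.mp hvol)))) measurableSet_Ico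
    intro u hu
    exact key (q u) (hq0 u hu) (q' u) (hq0' u hu)
  rw [integral_add hI1 hI3, integral_add hI2 (integrableOn_const (lt_top_iff_ne_top.mp hvol))] at hmono_int
  rw [setIntegral_const_Ico zero_le_one, sub_zero, one_mul] at hmono_int
  linarith

end Backward


/-- For Lipschitz `χ : ℝ₊ → ℝ`, the functional `X(q) = ∫₀¹ χ(q(u)) du` is
nondecreasing on `Q₂(ℝ₊)` for the order induced by the dual cone `Q₂(ℝ₊)*`
if and only if `χ` is nondecreasing and convex. -/
theorem integral_comp_monotone_iff_monotone_convex
    (χ : ℝ → ℝ) (K : ℝ≥0) (hχ : LipschitzOnWith K χ (Ici 0)) :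
    (∀ q ∈ Qcone, ∀ q' ∈ Qcone, inDualCone (fun u => q' u - q u) →
      (∫ u in Ico (0:ℝ) 1, χ (q u)) ≤ ∫ u in Ico (0:ℝ) 1, χ (q' u)) ↔
    (MonotoneOn χ (Ici 0) ∧ ConvexOn ℝ (Ici 0) χ) := by
  constructor
  · intro H
    exact ⟨forward_mono H, forward_convex H⟩
  · rintro ⟨hm, hcv⟩ q hq q' hq' hdual
    have e1 : (∫ u in Ico (0:ℝ) 1, χ (q u)) = ∫ u in Ico (0:ℝ) 1, chiT χ (q u) :=
      setIntegral_congr_fun measurableSet_Ico (fun u hu => (chiT_eq (hq.2.1 u hu)).symm)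
    have e2 : (∫ u in Ico (0:ℝ) 1, χ (q' u)) = ∫ u in Ico (0:ℝ) 1, chiT χ (q' u) :=
      setIntegral_congr_fun measurableSet_Ico (fun u hu => (chiT_eq (hq'.2.1 u hu)).symm)
    rw [e1, e2]
    by_contra hlt
    push_neg at hlt
    set δ := (∫ u in Ico (0:ℝ) 1, chiT χ (q u)) - ∫ u in Ico (0:ℝ) 1, chiT χ (q' u) with hδ
    have hδ0 : 0 < δ := by rw [hδ]; linarith
    have hK0 : (0:ℝ) ≤ K := K.coe_nonneg
    have hε : 0 < δ / (2 * K + 1) := by positivity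
    have hkey := backward_aux hχ hm hcv hq hq' hdual hε
    have hpos : (0:ℝ) < 2 * K + 1 := by positivity
    have ht : (2 * (K:ℝ) + 1) * (δ / (2 * K + 1)) = δ := by field_simp
    have h2 : 2 * (K:ℝ) * (δ / (2 * K + 1)) < δ := by nlinarith [ht, hε]
    linarith
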